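/- Let Q = [[0,1],[0,0]] with reduced SVD U = (1,0)^T, Σ = (1), V = (0,1)^T, and let ΔQ = [[0,0],[1,0]]. Define C = Σ + U^T ΔQ V (which equals (1)), with (trivial) SVD U_C = Σ_C = V_C = (1). Then the updated factors Ũ = U U_C, Σ̃ = Σ_C, Ṽ = V V_C satisfy Ũ Σ̃ Ṽ^T = [[0,1],[0,0]] ≠ Q + ΔQ = [[0,1],[1,0]], and the spectral-norm error ‖(Q+ΔQ) − Ũ Σ̃ Ṽ^T‖_2 = 1. -/

import Mathlib

open Matrix
open scoped Matrix.Norms.L2Operator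

/-- the concrete counterexample to Li et al.'s incremental SVD update.
With `Q = [[0,1],[0,0]]`, reduced SVD `U = (1,0)ᵀ, Σ = (1), V = (0,1)ᵀ`, and
`ΔQ = [[0,0],[1,0]]`, one has `C = Σ + Uᵀ ΔQ V = (1)` with trivial SVD
`U_C = Σ_C = V_C = (1)`, and the updated factors `Ũ = U U_C, Σ̃ = Σ_C, Ṽ = V V_C`
satisfy `Ũ Σ̃ Ṽᵀ = [[0,1],[0,0]] ≠ Q + ΔQ`, with spectral-norm error
`‖(Q+ΔQ) - Ũ Σ̃ Ṽᵀ‖₂ = 1`. -/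
lemma aux_norm : ‖(!![0,0;1,0] : Matrix (Fin 2) (Fin 2) ℝ)‖ = 1 := by
  rw [Matrix.l2_opNorm_def]
  set M : Matrix (Fin 2) (Fin 2) ℝ := !![0,0;1,0] with hM
  apply le_antisymm
  · apply ContinuousLinearMap.opNorm_le_bound _ zero_le_one
    intro x
    rw [one_mul]
    have hx : ∀ y : EuclideanSpace ℝ (Fin 2),
        ((Matrix.toEuclideanLin.trans LinearMap.toContinuousLinearMap) M) y =
          (WithLp.equiv 2 (Fin 2 → ℝ)).symm (M *ᵥ (WithLp.equiv 2 (Fin 2 → ℝ) y)) := by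
      intro y; rfl
    rw [hx]
    rw [EuclideanSpace.norm_eq, EuclideanSpace.norm_eq]
    apply Real.sqrt_le_sqrt
    have : ∀ i, (M *ᵥ (WithLp.equiv 2 (Fin 2 → ℝ) x)) i =
        ![0, x 0] i := by
      intro i
      fin_cases i <;> simp [hM, Matrix.mulVec, dotProduct, Fin.sum_univ_two]
    rw [Fin.sum_univ_two, Fin.sum_univ_two]
    simp only [WithLp.equiv_symm_apply, WithLp.ofLp_toLp]
    rw [this 0, this 1]
    simp only [Matrix.cons_val_zero, Matrix.cons_val_one, Matrix.head_cons, norm_zero]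
    have := sq_nonneg ‖x 1‖
    have hxe : ∀ i, (WithLp.equiv 2 (Fin 2 → ℝ) x) i = x i := fun i => rfl
    nlinarith [norm_nonneg (x 0), norm_nonneg (x 1)]
  · have h := ContinuousLinearMap.unit_le_opNorm
      ((Matrix.toEuclideanLin.trans LinearMap.toContinuousLinearMap) M)
      ((WithLp.equiv 2 (Fin 2 → ℝ)).symm ![1,0]) ?_
    · refine le_trans ?_ h
      have : ((Matrix.toEuclideanLin.trans LinearMap.toContinuousLinearMap) M)
          ((WithLp.equiv 2 (Fin 2 → ℝ)).symm ![1,0]) =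
          (WithLp.equiv 2 (Fin 2 → ℝ)).symm ![0,1] := by
        apply (WithLp.equiv 2 (Fin 2 → ℝ)).injective
        ext i
        fin_cases i <;> simp [hM, Matrix.mulVec, dotProduct, Fin.sum_univ_two]
      rw [this, EuclideanSpace.norm_eq]
      norm_num [Fin.sum_univ_two]
    · rw [EuclideanSpace.norm_eq]
      norm_num [Fin.sum_univ_two]


theorem incremental_svd_counterexample
    (Q dQ : Matrix (Fin 2) (Fin 2) ℝ) (hQ : Q = !![0, 1; 0, 0]) (hdQ : dQ = !![0, 0; 1, 0])
    (U V : Matrix (Fin 2) (Fin 1) ℝ) (hU : U = !![1; 0]) (hV : V = !![0; 1])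
    (Sig : Matrix (Fin 1) (Fin 1) ℝ) (hSig : Sig = !![1])
    (Cm : Matrix (Fin 1) (Fin 1) ℝ) (hCm : Cm = Sig + Uᵀ * dQ * V)
    (UC SC VC : Matrix (Fin 1) (Fin 1) ℝ)
    (hUC : UC = !![1]) (hSC : SC = !![1]) (hVC : VC = !![1]) :
    Cm = !![1] ∧
    Cm = UC * SC * VCᵀ ∧
    (U * UC) * SC * (V * VC)ᵀ = !![0, 1; 0, 0] ∧
    (U * UC) * SC * (V * VC)ᵀ ≠ Q + dQ ∧
    Q + dQ = !![0, 1; 1, 0] ∧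
    ‖(Q + dQ) - (U * UC) * SC * (V * VC)ᵀ‖ = 1 := by

  have h1 : Cm = !![1] := by
    subst hCm hSig hU hV hdQ
    ext i j; fin_cases i; fin_cases j
    simp [Matrix.mul_apply, Fin.sum_univ_two, Fin.sum_univ_one, Matrix.vecHead, Matrix.vecTail, Matrix.transpose_apply]
  have h2 : (U * UC) * SC * (V * VC)ᵀ = !![0, 1; 0, 0] := by
    subst hU hV hUC hSC hVC
    ext i j; fin_cases i <;> fin_cases j <;>
      simp [Matrix.mul_apply, Fin.sum_univ_two, Fin.sum_univ_one, Matrix.vecHead, Matrix.vecTail, Matrix.transpose_apply]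
  have h3 : Q + dQ = !![0, 1; 1, 0] := by
    subst hQ hdQ; ext i j; fin_cases i <;> fin_cases j <;> simp
  refine ⟨h1, ?_, h2, ?_, h3, ?_⟩
  · subst hUC hSC hVC
    rw [h1]; ext i j; fin_cases i; fin_cases j
    simp [Matrix.mul_apply, Fin.sum_univ_one, Matrix.vecHead, Matrix.vecTail, Matrix.transpose_apply]
  · rw [h2, h3]
    intro h
    have := congrFun (congrFun h 1) 0
    norm_num at this
  · rw [h2, h3]
    have h4 : (!![0,1;1,0] : Matrix (Fin 2) (Fin 2) ℝ) - !![0,1;0,0] = !![0,0;1,0] := by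
      ext i j; fin_cases i <;> fin_cases j <;> simp
    rw [h4, aux_norm]
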